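/- arXiv:2305.00164 — 3 statements merged into one kernel-verified Lean document; each statement's English description precedes it below -/
import Mathlib

section
/- Let f be convex on [0,1] with unique minimizer Z(f) and minimum M(f), and suppose there exist constants 0 < c₁ ≤ c₂ < ∞ and k ≥ 1 such that c₁ |t − Z(f)|^k ≤ f(t) − M(f) ≤ c₂ |t − Z(f)|^k for all t in a neighborhood of Z(f). Then there exist positive constants A, B (depending on c₁, c₂, k) such that for all sufficiently small ε > 0: A ε^{2k/(2k+1)} ≤ ρ_m(ε; f) ≤ B ε^{2k/(2k+1)} and A ε^{2/(2k+1)} ≤ ρ_z(ε; f) ≤ B ε^{2/(2k+1)}. -/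
open MeasureTheory Set

/-- L2 distance between two functions on [0,1]. -/
noncomputable def L2 (f g : ℝ → ℝ) : ℝ :=
  Real.sqrt (∫ t in (0:ℝ)..1, (f t - g t) ^ 2)

/-- Truncation f_u(t) = max{f(t), u}. -/
def trunc (f : ℝ → ℝ) (u : ℝ) : ℝ → ℝ := fun t => max (f t) u

/-- z is the unique minimizer of f on [0,1]. -/
def UniqueMinOn (f : ℝ → ℝ) (z : ℝ) : Prop :=
  z ∈ Icc (0:ℝ) 1 ∧ ∀ t ∈ Icc (0:ℝ) 1, t ≠ z → f z < f t

/-- Water-filling depth ρ_m(ε; f), where Mf is the minimum of f. -/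
noncomputable def rhoM (ε : ℝ) (f : ℝ → ℝ) (Mf : ℝ) : ℝ :=
  sSup {v | ∃ u, v = u - Mf ∧ L2 f (trunc f u) ≤ ε}

/-- Water-filling width ρ_z(ε; f), where Zf is the minimizer and Mf the minimum of f. -/
noncomputable def rhoZ (ε : ℝ) (f : ℝ → ℝ) (Zf Mf : ℝ) : ℝ :=
  sSup {v | ∃ t ∈ Icc (0:ℝ) 1, v = |t - Zf| ∧ f t ≤ rhoM ε f Mf + Mf}

/-- Local modulus of continuity of the minimum. -/
noncomputable def omegaM (ε : ℝ) (f : ℝ → ℝ) (Mf : ℝ) : ℝ :=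
  sSup {v | ∃ g zg, ConvexOn ℝ (Icc (0:ℝ) 1) g ∧ UniqueMinOn g zg ∧
    L2 f g ≤ ε ∧ v = |Mf - g zg|}

/-- Local modulus of continuity of the minimizer. -/
noncomputable def omegaZ (ε : ℝ) (f : ℝ → ℝ) (Zf : ℝ) : ℝ :=
  sSup {v | ∃ g zg, ConvexOn ℝ (Icc (0:ℝ) 1) g ∧ UniqueMinOn g zg ∧
    L2 f g ≤ ε ∧ v = |Zf - zg|}

/-! ### Auxiliary lemmas -/

private lemma stmt11_sqmax (a u : ℝ) : (a - max a u)^2 = (max (u - a) 0)^2 := by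
  rcases le_total a u with h | h
  · rw [max_eq_right h, max_eq_left (by linarith)]; ring
  · rw [max_eq_left h, max_eq_right (by linarith)]; ring

/-- The squared-L2 "energy" of truncation at level u. -/
noncomputable def Efun (f : ℝ → ℝ) (u : ℝ) : ℝ :=
  ∫ t in (0:ℝ)..1, (max (u - f t) 0)^2

private lemma stmt11_L2_trunc (f : ℝ → ℝ) (u : ℝ) :
    L2 f (trunc f u) = Real.sqrt (Efun f u) := by
  rw [L2, Efun]
  congr 1
  exact intervalIntegral.integral_congr (fun t _ => stmt11_sqmax (f t) u)

private lemma stmt11_meas_f {f : ℝ → ℝ} (hf : ConvexOn ℝ (Icc (0:ℝ) 1) f) :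
    AEStronglyMeasurable f (volume.restrict (Ioc (0:ℝ) 1)) := by
  have h1 : ConvexOn ℝ (Ioo (0:ℝ) 1) f := hf.subset Ioo_subset_Icc_self (convex_Ioo 0 1)
  have h2 : ContinuousOn f (Ioo (0:ℝ) 1) := h1.continuousOn isOpen_Ioo
  have h3 : AEStronglyMeasurable f (volume.restrict (Ioo (0:ℝ) 1)) :=
    h2.aestronglyMeasurable measurableSet_Ioo
  rwa [Measure.restrict_congr_set Ioo_ae_eq_Ioc] at h3

private lemma stmt11_g_aesm {f : ℝ → ℝ} (hf : ConvexOn ℝ (Icc (0:ℝ) 1) f) (u : ℝ) :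
    AEStronglyMeasurable (fun t => (max (u - f t) 0)^2) (volume.restrict (Ioc (0:ℝ) 1)) := by
  have h : AEStronglyMeasurable (fun t => max (u - f t) 0) (volume.restrict (Ioc (0:ℝ) 1)) :=
    (aestronglyMeasurable_const.sub (stmt11_meas_f hf)).sup aestronglyMeasurable_const
  have := h.mul h
  simpa [pow_two, Pi.mul_def] using this

private lemma stmt11_g_int {f : ℝ → ℝ} {z : ℝ} (hf : ConvexOn ℝ (Icc (0:ℝ) 1) f)
    (hm : ∀ t ∈ Icc (0:ℝ) 1, f z ≤ f t) (u : ℝ) :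
    IntegrableOn (fun t => (max (u - f t) 0)^2) (Ioc (0:ℝ) 1) := by
  refine Integrable.mono' (integrable_const ((max (u - f z) 0)^2)) (stmt11_g_aesm hf u) ?_
  filter_upwards [ae_restrict_mem measurableSet_Ioc] with t ht
  have h1 : f z ≤ f t := hm t (Ioc_subset_Icc_self ht)
  have h2 : max (u - f t) 0 ≤ max (u - f z) 0 := max_le_max (by linarith) le_rfl
  rw [Real.norm_eq_abs, abs_of_nonneg (sq_nonneg _)]
  exact pow_le_pow_left₀ (le_max_right _ _) h2 2

private lemma stmt11_g_ii {f : ℝ → ℝ} {z : ℝ} (hf : ConvexOn ℝ (Icc (0:ℝ) 1) f)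
    (hm : ∀ t ∈ Icc (0:ℝ) 1, f z ≤ f t) (u : ℝ) :
    IntervalIntegrable (fun t => (max (u - f t) 0)^2) volume 0 1 := by
  rw [intervalIntegrable_iff_integrableOn_Ioc_of_le zero_le_one]
  exact stmt11_g_int hf hm u

private lemma stmt11_E_nonneg (f : ℝ → ℝ) (u : ℝ) : 0 ≤ Efun f u :=
  intervalIntegral.integral_nonneg zero_le_one (fun t _ => sq_nonneg _)

private lemma stmt11_E_mono {f : ℝ → ℝ} {z : ℝ} (hf : ConvexOn ℝ (Icc (0:ℝ) 1) f)
    (hm : ∀ t ∈ Icc (0:ℝ) 1, f z ≤ f t) {u u' : ℝ} (h : u ≤ u') :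
    Efun f u ≤ Efun f u' := by
  refine intervalIntegral.integral_mono_on zero_le_one (stmt11_g_ii hf hm u)
    (stmt11_g_ii hf hm u') ?_
  intro t _
  exact pow_le_pow_left₀ (le_max_right _ _) (max_le_max (by linarith) le_rfl) 2

/-- Global lower bound from convexity plus a local lower bound. -/
private lemma stmt11_glob_low (f : ℝ → ℝ) (z c₁ k δ : ℝ)
    (hf : ConvexOn ℝ (Icc (0:ℝ) 1) f) (hz01 : z ∈ Icc (0:ℝ) 1)
    (hm : ∀ t ∈ Icc (0:ℝ) 1, f z ≤ f t) (hδ : 0 < δ)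
    (hlocl : ∀ t ∈ Icc (0:ℝ) 1, |t - z| ≤ δ → c₁ * |t - z| ^ k ≤ f t - f z) :
    ∀ t ∈ Icc (0:ℝ) 1, c₁ * (min |t - z| δ) ^ k ≤ f t - f z := by
  intro t ht
  rcases le_total |t - z| δ with h | h
  · rw [min_eq_left h]; exact hlocl t ht h
  · rw [min_eq_right h]
    have habs : 0 < |t - z| := lt_of_lt_of_le hδ h
    set l : ℝ := δ / |t - z| with hl
    have hl0 : 0 < l := div_pos hδ habs
    have hl1 : l ≤ 1 := (div_le_one habs).mpr h
    have hs := hf.2 hz01 ht (by linarith : (0:ℝ) ≤ 1 - l) hl0.le (by ring)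
    set s : ℝ := (1 - l) • z + l • t with hs'
    have hsz : |s - z| = δ := by
      have : s - z = l * (t - z) := by rw [hs']; simp only [smul_eq_mul]; ring
      rw [this, abs_mul, abs_of_pos hl0, hl]
      field_simp
    have hsIcc : s ∈ Icc (0:ℝ) 1 := (convex_Icc (0:ℝ) 1) hz01 ht (by linarith) hl0.le (by ring)
    have h1 : c₁ * δ ^ k ≤ f s - f z := by
      have := hlocl s hsIcc (le_of_eq hsz)
      rwa [hsz] at this
    have h2 : f s ≤ (1 - l) * f z + l * f t := by simpa [smul_eq_mul] using hs
    have h3 : f s - f z ≤ l * (f t - f z) := by nlinarith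
    have h4 : l * (f t - f z) ≤ f t - f z := by
      have := hm t ht
      nlinarith
    linarith

/-- Upper bound on the truncation energy. -/
private lemma stmt11_E_upper (f : ℝ → ℝ) (z c₁ k δ v : ℝ)
    (hgint : IntegrableOn (fun t => (max (f z + v - f t) 0)^2) (Ioc (0:ℝ) 1))
    (hm : ∀ t ∈ Icc (0:ℝ) 1, f z ≤ f t) (hδ : 0 < δ) (hc₁ : 0 < c₁) (hk0 : 0 < k)
    (hlow : ∀ t ∈ Icc (0:ℝ) 1, c₁ * (min |t - z| δ) ^ k ≤ f t - f z)
    (hv0 : 0 ≤ v) (hv : v ≤ c₁ * δ ^ k) :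
    Efun f (f z + v) ≤ v^2 * (2 * (v/c₁) ^ (k⁻¹)) := by
  set r : ℝ := (v/c₁) ^ (k⁻¹) with hrdef
  have hr0 : 0 ≤ r := Real.rpow_nonneg (by positivity) _
  set S : Set ℝ := Icc (z - r) (z + r) with hS
  have hpt : ∀ t ∈ Icc (0:ℝ) 1,
      (max (f z + v - f t) 0)^2 ≤ S.indicator (fun _ => v^2) t := by
    intro t ht
    rcases le_or_gt (f z + v) (f t) with h | h
    · rw [max_eq_right (by linarith)]
      simpa using Set.indicator_nonneg (fun _ _ => sq_nonneg v) t
    · have hmin : c₁ * (min |t - z| δ) ^ k ≤ f t - f z := hlow t ht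
      have hftz : f z ≤ f t := hm t ht
      have hlt : c₁ * (min |t - z| δ) ^ k < v := by linarith
      have hminlt : min |t - z| δ < δ := by
        by_contra hcon
        push_neg at hcon
        have : δ ^ k ≤ (min |t - z| δ) ^ k := Real.rpow_le_rpow hδ.le hcon hk0.le
        nlinarith
      have hmeq : min |t - z| δ = |t - z| := min_eq_left (by
        rcases le_total |t - z| δ with h' | h'
        · exact h'
        · exfalso; rw [min_eq_right h'] at hminlt; exact lt_irrefl _ hminlt)
      rw [hmeq] at hlt
      have htr : |t - z| ≤ r := by
        have h1 : |t - z| ^ k ≤ v / c₁ := by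
          rw [le_div_iff₀ hc₁]; linarith [hlt]
        calc |t - z| = (|t - z| ^ k) ^ (k⁻¹) := by
              rw [Real.rpow_rpow_inv (abs_nonneg _) hk0.ne']
          _ ≤ r := Real.rpow_le_rpow (Real.rpow_nonneg (abs_nonneg _) _) h1 (by positivity)
      have htS : t ∈ S := by
        rw [hS, mem_Icc]
        have := abs_le.mp htr
        constructor <;> linarith [this.1, this.2]
      rw [Set.indicator_of_mem htS]
      have h1 : 0 ≤ f z + v - f t := by linarith
      rw [max_eq_left h1]
      nlinarith
  have hind_int : IntervalIntegrable (S.indicator (fun _ => v^2)) volume 0 1 := by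
    rw [intervalIntegrable_iff_integrableOn_Ioc_of_le zero_le_one]
    exact (integrableOn_const measure_Ioc_lt_top.ne).indicator measurableSet_Icc
  have hE_int : IntervalIntegrable (fun t => (max (f z + v - f t) 0)^2) volume 0 1 := by
    rw [intervalIntegrable_iff_integrableOn_Ioc_of_le zero_le_one]; exact hgint
  have h1 : Efun f (f z + v) ≤ ∫ t in (0:ℝ)..1, S.indicator (fun _ => v^2) t :=
    intervalIntegral.integral_mono_on zero_le_one hE_int hind_int hpt
  have h2 : ∫ t in (0:ℝ)..1, S.indicator (fun _ => v^2) t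
      = (volume (Ioc (0:ℝ) 1 ∩ S)).toReal * v^2 := by
    rw [intervalIntegral.integral_of_le zero_le_one, setIntegral_indicator measurableSet_Icc,
      setIntegral_const, smul_eq_mul]
    rfl
  have h3 : (volume (Ioc (0:ℝ) 1 ∩ S)).toReal ≤ 2 * r := by
    have hle : volume (Ioc (0:ℝ) 1 ∩ S) ≤ volume S := measure_mono inter_subset_right
    have hvs : volume S = ENNReal.ofReal (2 * r) := by
      rw [hS, Real.volume_Icc]; congr 1; ring
    calc (volume (Ioc (0:ℝ) 1 ∩ S)).toReal ≤ (volume S).toReal := by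
          apply ENNReal.toReal_mono _ hle
          rw [hvs]; exact ENNReal.ofReal_ne_top
      _ = 2 * r := by rw [hvs, ENNReal.toReal_ofReal (by positivity)]
  calc Efun f (f z + v) ≤ (volume (Ioc (0:ℝ) 1 ∩ S)).toReal * v^2 := by rw [← h2]; exact h1
    _ ≤ (2 * r) * v^2 := by nlinarith [sq_nonneg v]
    _ = v^2 * (2 * r) := by ring

/-- Lower bound on the truncation energy. -/
private lemma stmt11_E_lower (f : ℝ → ℝ) (z c₂ k δ v : ℝ)
    (hgint : IntegrableOn (fun t => (max (f z + v - f t) 0)^2) (Ioc (0:ℝ) 1))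
    (hz01 : z ∈ Icc (0:ℝ) 1) (hc₂ : 0 < c₂) (hk0 : 0 < k) (hδhalf : δ ≤ 1/2)
    (hup : ∀ t ∈ Icc (0:ℝ) 1, |t - z| ≤ δ → f t - f z ≤ c₂ * |t - z| ^ k)
    (hv0 : 0 ≤ v) (hrδ : (v/(2*c₂)) ^ (k⁻¹) ≤ δ) :
    (v/2)^2 * ((v/(2*c₂)) ^ (k⁻¹)) ≤ Efun f (f z + v) := by
  set r : ℝ := (v/(2*c₂)) ^ (k⁻¹) with hrdef
  have hr0 : 0 ≤ r := Real.rpow_nonneg (by positivity) _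
  have hrk : r ^ k = v / (2*c₂) := Real.rpow_inv_rpow (by positivity) hk0.ne'
  obtain ⟨a, b, hJsub, hJvol, hJdist⟩ : ∃ a b : ℝ, Ioc a b ⊆ Ioc (0:ℝ) 1 ∧
      volume (Ioc a b) = ENNReal.ofReal r ∧ ∀ x ∈ Ioc a b, |x - z| ≤ r := by
    rcases le_total z (1/2) with hhalf | hhalf
    · refine ⟨z, z + r, ?_, by rw [Real.volume_Ioc]; congr 1; ring, ?_⟩
      · intro x hx
        exact ⟨lt_of_le_of_lt hz01.1 hx.1, hx.2.trans (by linarith)⟩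
      · intro x hx
        rw [abs_le]; constructor <;> [linarith [hx.1.le]; linarith [hx.2]]
    · refine ⟨z - r, z, ?_, by rw [Real.volume_Ioc]; congr 1; ring, ?_⟩
      · intro x hx
        have h0 : (0:ℝ) ≤ z - r := by linarith
        exact ⟨lt_of_le_of_lt h0 hx.1, hx.2.trans hz01.2⟩
      · intro x hx
        rw [abs_le]; constructor <;> [linarith [hx.1.le]; linarith [hx.2]]
  have hpt : ∀ x ∈ Ioc a b, (v/2)^2 ≤ (max (f z + v - f x) 0)^2 := by
    intro x hx
    have hx01 : x ∈ Icc (0:ℝ) 1 := Ioc_subset_Icc_self (hJsub hx)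
    have hxd : |x - z| ≤ r := hJdist x hx
    have h1 : f x - f z ≤ c₂ * |x - z| ^ k := hup x hx01 (hxd.trans hrδ)
    have h2 : |x - z| ^ k ≤ r ^ k := Real.rpow_le_rpow (abs_nonneg _) hxd hk0.le
    have h3 : f x - f z ≤ v / 2 := by
      calc f x - f z ≤ c₂ * |x - z| ^ k := h1
        _ ≤ c₂ * (r ^ k) := by nlinarith
        _ = v / 2 := by rw [hrk]; field_simp
    have h4 : v / 2 ≤ max (f z + v - f x) 0 := le_max_of_le_left (by linarith)
    exact pow_le_pow_left₀ (by positivity) h4 2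
  have h5 : (v/2)^2 * (volume (Ioc a b)).toReal ≤ ∫ x in Ioc a b,
      (max (f z + v - f x) 0)^2 :=
    setIntegral_ge_of_const_le_real measurableSet_Ioc (by rw [hJvol]; exact ENNReal.ofReal_ne_top)
      hpt (hgint.mono_set hJsub)
  have h6 : ∫ x in Ioc a b, (max (f z + v - f x) 0)^2
      ≤ ∫ x in Ioc (0:ℝ) 1, (max (f z + v - f x) 0)^2 :=
    setIntegral_mono_set hgint (Filter.Eventually.of_forall (fun x => sq_nonneg _))
      hJsub.eventuallyLE
  have h7 : (volume (Ioc a b)).toReal = r := by rw [hJvol, ENNReal.toReal_ofReal hr0]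
  rw [Efun, intervalIntegral.integral_of_le zero_le_one]
  calc (v/2)^2 * r = (v/2)^2 * (volume (Ioc a b)).toReal := by rw [h7]
    _ ≤ _ := h5.trans h6

private lemma stmt11_rpow_split (v k : ℝ) (hv : 0 < v) :
    v ^ ((2:ℝ) + k⁻¹) = v^2 * v^(k⁻¹) := by
  rw [Real.rpow_add hv, Real.rpow_two]

private lemma stmt11_upper_alg (v c₁ k : ℝ) (hv : 0 < v) (hc : 0 < c₁) :
    v^2 * (2 * (v/c₁)^(k⁻¹)) = (2 / c₁^(k⁻¹)) * v^((2:ℝ)+k⁻¹) := by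
  rw [stmt11_rpow_split v k hv, Real.div_rpow hv.le hc.le]
  have : (0:ℝ) < c₁ ^ (k⁻¹) := Real.rpow_pos_of_pos hc _
  field_simp

private lemma stmt11_lower_alg (w c₂ k : ℝ) (hw : 0 < w) (hc : 0 < c₂) :
    (w/2)^2 * ((w/(2*c₂))^(k⁻¹)) = w^((2:ℝ)+k⁻¹) / (4*(2*c₂)^(k⁻¹)) := by
  rw [stmt11_rpow_split w k hw, Real.div_rpow hw.le (by positivity)]
  have h : (0:ℝ) < (2*c₂) ^ (k⁻¹) := Real.rpow_pos_of_pos (by positivity) _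
  rw [eq_div_iff (by positivity)]
  field_simp
  norm_num

set_option maxHeartbeats 1000000 in
/-- If f behaves like |t - Z(f)|^k near its minimizer, then
ρ_m(ε; f) ≍ ε^(2k/(2k+1)) and ρ_z(ε; f) ≍ ε^(2/(2k+1)) as ε → 0⁺. -/
theorem stmt11 (f : ℝ → ℝ) (z c₁ c₂ k : ℝ)
    (hf : ConvexOn ℝ (Icc (0:ℝ) 1) f) (hz : UniqueMinOn f z)
    (hc₁ : 0 < c₁) (hc₁₂ : c₁ ≤ c₂) (hk : 1 ≤ k)
    (hloc : ∃ δ > 0, ∀ t ∈ Icc (0:ℝ) 1, |t - z| ≤ δ →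
      c₁ * |t - z| ^ k ≤ f t - f z ∧ f t - f z ≤ c₂ * |t - z| ^ k) :
    ∃ A B ε₀ : ℝ, 0 < A ∧ 0 < B ∧ 0 < ε₀ ∧ ∀ ε : ℝ, 0 < ε → ε ≤ ε₀ →
      A * ε ^ ((2*k)/(2*k+1)) ≤ rhoM ε f (f z) ∧
      rhoM ε f (f z) ≤ B * ε ^ ((2*k)/(2*k+1)) ∧
      A * ε ^ ((2:ℝ)/(2*k+1)) ≤ rhoZ ε f z (f z) ∧
      rhoZ ε f z (f z) ≤ B * ε ^ ((2:ℝ)/(2*k+1)) := by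
  obtain ⟨hz01, hzmin⟩ := hz
  obtain ⟨δ₁, hδ₁, hloc₁⟩ := hloc
  have hk0 : (0:ℝ) < k := lt_of_lt_of_le one_pos hk
  have hc₂ : 0 < c₂ := lt_of_lt_of_le hc₁ hc₁₂
  set δ : ℝ := min δ₁ (1/2) with hδdef
  have hδ : 0 < δ := lt_min hδ₁ (by norm_num)
  have hδhalf : δ ≤ 1/2 := min_le_right _ _
  have hlocl : ∀ t ∈ Icc (0:ℝ) 1, |t - z| ≤ δ → c₁ * |t - z| ^ k ≤ f t - f z :=
    fun t ht h => (hloc₁ t ht (h.trans (min_le_left _ _))).1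
  have hlocu : ∀ t ∈ Icc (0:ℝ) 1, |t - z| ≤ δ → f t - f z ≤ c₂ * |t - z| ^ k :=
    fun t ht h => (hloc₁ t ht (h.trans (min_le_left _ _))).2
  have hm : ∀ t ∈ Icc (0:ℝ) 1, f z ≤ f t := by
    intro t ht
    rcases eq_or_ne t z with rfl | h
    · exact le_rfl
    · exact (hzmin t ht h).le
  have hlow := stmt11_glob_low f z c₁ k δ hf hz01 hm hδ hlocl
  have hgint : ∀ u : ℝ, IntegrableOn (fun t => (max (u - f t) 0)^2) (Ioc (0:ℝ) 1) :=
    stmt11_g_int hf hm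
  have hδk : (0:ℝ) < δ ^ k := Real.rpow_pos_of_pos hδ _
  -- exponents
  set q : ℝ := (2*k)/(2*k+1) with hqdef
  set q2 : ℝ := (2:ℝ)/(2*k+1) with hq2def
  set p : ℝ := 2 + k⁻¹ with hpdef
  have h2k1 : (0:ℝ) < 2*k+1 := by linarith
  have hq : 0 < q := by rw [hqdef]; positivity
  have hq2pos : 0 < q2 := by rw [hq2def]; positivity
  have hp : 0 < p := by rw [hpdef]; positivity
  have hpne : (2:ℝ) + k⁻¹ ≠ 0 := by positivity
  have hqp : q * p = 2 := by
    rw [hqdef, hpdef]; field_simp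
  have hq2k : q * k⁻¹ = q2 := by
    rw [hqdef, hq2def]; field_simp
  have h2p : (2:ℝ) * p⁻¹ = q := by
    have hp' : p = (2*k+1)/k := by rw [hpdef]; field_simp
    rw [hp', hqdef, inv_div]
    ring
  -- constants
  set a : ℝ := (c₁ ^ (k⁻¹) / 2) ^ (p⁻¹) with hadef
  have hc₁k : (0:ℝ) < c₁ ^ (k⁻¹) := Real.rpow_pos_of_pos hc₁ _
  have ha : 0 < a := Real.rpow_pos_of_pos (by positivity) _
  set C₂ : ℝ := 4*(2*c₂)^(k⁻¹) with hC₂def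
  have hC₂ : 0 < C₂ := by rw [hC₂def]; positivity
  set B₁ : ℝ := C₂ ^ (p⁻¹) with hB₁def
  have hB₁ : 0 < B₁ := Real.rpow_pos_of_pos hC₂ _
  set vs : ℝ := c₁ * δ ^ k with hvsdef
  have hvs0 : 0 < vs := by rw [hvsdef]; positivity
  -- the threshold energy is positive
  have hrvs : (vs/(2*c₂)) ^ (k⁻¹) ≤ δ := by
    have h1 : vs/(2*c₂) ≤ δ ^ k := by
      rw [hvsdef, div_le_iff₀ (by positivity)]
      have h2 := mul_le_mul_of_nonneg_right hc₁₂ hδk.le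
      have h3 := mul_pos hc₂ hδk
      linarith
    calc (vs/(2*c₂)) ^ (k⁻¹) ≤ (δ ^ k) ^ (k⁻¹) :=
          Real.rpow_le_rpow (by positivity) h1 (by positivity)
      _ = δ := Real.rpow_rpow_inv hδ.le hk0.ne'
  have hEs_lb := stmt11_E_lower f z c₂ k δ vs (hgint _) hz01 hc₂ hk0 hδhalf hlocu hvs0.le hrvs
  have hEs : 0 < Efun f (f z + vs) := by
    refine lt_of_lt_of_le ?_ hEs_lb
    have h : (0:ℝ) < (vs/(2*c₂)) ^ (k⁻¹) := Real.rpow_pos_of_pos (by positivity) _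
    positivity
  set ε₀ : ℝ := min (min ((vs/a)^(q⁻¹)) ((vs/(2*B₁))^(q⁻¹))) (Real.sqrt (Efun f (f z + vs)) / 2)
    with hε₀def
  have hε₀ : 0 < ε₀ := by
    refine lt_min (lt_min ?_ ?_) ?_
    · exact Real.rpow_pos_of_pos (by positivity) _
    · exact Real.rpow_pos_of_pos (by positivity) _
    · have := Real.sqrt_pos.mpr hEs; linarith
  refine ⟨min a ((a/c₂)^(k⁻¹)), max B₁ ((B₁/c₁)^(k⁻¹)), ε₀,
    lt_min ha (Real.rpow_pos_of_pos (by positivity) _),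
    lt_of_lt_of_le hB₁ (le_max_left _ _), hε₀, ?_⟩
  intro ε hε hεε₀
  have hεq : (0:ℝ) < ε ^ q := Real.rpow_pos_of_pos hε _
  have hεq2 : (0:ℝ) < ε ^ q2 := Real.rpow_pos_of_pos hε _
  -- the three smallness constraints
  have hcon1 : a * ε ^ q ≤ vs := by
    have h1 : ε ≤ (vs/a)^(q⁻¹) := hεε₀.trans ((min_le_left _ _).trans (min_le_left _ _))
    have h2 : ε ^ q ≤ vs/a := by
      calc ε ^ q ≤ ((vs/a)^(q⁻¹)) ^ q := Real.rpow_le_rpow hε.le h1 hq.le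
        _ = vs/a := Real.rpow_inv_rpow (by positivity) hq.ne'
    calc a * ε ^ q ≤ a * (vs/a) := mul_le_mul_of_nonneg_left h2 ha.le
      _ = vs := by field_simp
  have hcon2 : B₁ * ε ^ q ≤ vs/2 := by
    have h1 : ε ≤ (vs/(2*B₁))^(q⁻¹) := hεε₀.trans ((min_le_left _ _).trans (min_le_right _ _))
    have h2 : ε ^ q ≤ vs/(2*B₁) := by
      calc ε ^ q ≤ ((vs/(2*B₁))^(q⁻¹)) ^ q := Real.rpow_le_rpow hε.le h1 hq.le
        _ = vs/(2*B₁) := Real.rpow_inv_rpow (by positivity) hq.ne'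
    calc B₁ * ε ^ q ≤ B₁ * (vs/(2*B₁)) := mul_le_mul_of_nonneg_left h2 hB₁.le
      _ = vs/2 := by field_simp
  have hcon3 : ε < Real.sqrt (Efun f (f z + vs)) := by
    have h1 : ε ≤ Real.sqrt (Efun f (f z + vs)) / 2 := hεε₀.trans (min_le_right _ _)
    have h2 := Real.sqrt_pos.mpr hEs
    linarith
  -- rhoM lower bound : membership of v = a ε^q
  set v : ℝ := a * ε ^ q with hvdef
  have hv0 : 0 < v := by positivity
  have hvvs : v ≤ vs := hcon1
  have hEv_le : Efun f (f z + v) ≤ ε ^ 2 := by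
    have h1 := stmt11_E_upper f z c₁ k δ v (hgint _) hm hδ hc₁ hk0 hlow hv0.le
      (by rw [← hvsdef]; exact hvvs)
    have h2 : v^2 * (2 * (v/c₁)^(k⁻¹)) = (2 / c₁^(k⁻¹)) * v^p := by
      rw [hpdef]; exact stmt11_upper_alg v c₁ k hv0 hc₁
    have h3 : v ^ p = (c₁^(k⁻¹)/2) * ε ^ 2 := by
      rw [hvdef, Real.mul_rpow ha.le hεq.le, hadef,
        Real.rpow_inv_rpow (by positivity) hp.ne', ← Real.rpow_mul hε.le, hqp, Real.rpow_two]
    calc Efun f (f z + v) ≤ (2 / c₁^(k⁻¹)) * v ^ p := by rw [← h2]; exact h1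
      _ = ε ^ 2 := by rw [h3]; field_simp
  have hmemM : v ∈ {w | ∃ u, w = u - f z ∧ L2 f (trunc f u) ≤ ε} := by
    refine ⟨f z + v, by ring, ?_⟩
    rw [stmt11_L2_trunc]
    calc Real.sqrt (Efun f (f z + v)) ≤ Real.sqrt (ε ^ 2) := Real.sqrt_le_sqrt hEv_le
      _ = ε := Real.sqrt_sq hε.le
  -- rhoM upper bound : all elements are small
  have hub : ∀ w ∈ {w | ∃ u, w = u - f z ∧ L2 f (trunc f u) ≤ ε}, w ≤ B₁ * ε ^ q := by
    rintro w ⟨u, hw, hL2⟩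
    rcases le_or_gt w 0 with h0 | h0
    · exact h0.trans (by positivity)
    · have hu : u = f z + w := by rw [hw]; ring
      have hL2' : Real.sqrt (Efun f (f z + w)) ≤ ε := by
        rw [← hu, ← stmt11_L2_trunc]; exact hL2
      have hEw : Efun f (f z + w) ≤ ε ^ 2 := by
        rw [← Real.sq_sqrt (stmt11_E_nonneg f (f z + w))]
        exact pow_le_pow_left₀ (Real.sqrt_nonneg _) hL2' 2
      have hwvs : w < vs := by
        by_contra hcon
        push_neg at hcon
        have h1 : Efun f (f z + vs) ≤ Efun f (f z + w) := stmt11_E_mono hf hm (by linarith)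
        have h2 : Real.sqrt (Efun f (f z + vs)) ≤ Real.sqrt (Efun f (f z + w)) :=
          Real.sqrt_le_sqrt h1
        linarith
      have hrw : (w/(2*c₂)) ^ (k⁻¹) ≤ δ := by
        have h1 : w/(2*c₂) ≤ δ ^ k := by
          rw [div_le_iff₀ (by positivity)]
          have h2 : vs ≤ δ^k * (2*c₂) := by
            rw [hvsdef]
            have h3 := mul_le_mul_of_nonneg_right hc₁₂ hδk.le
            have h4 := mul_pos hc₂ hδk
            linarith
          linarith
        calc (w/(2*c₂)) ^ (k⁻¹) ≤ (δ ^ k) ^ (k⁻¹) :=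
              Real.rpow_le_rpow (by positivity) h1 (by positivity)
          _ = δ := Real.rpow_rpow_inv hδ.le hk0.ne'
      have h1 := stmt11_E_lower f z c₂ k δ w (hgint _) hz01 hc₂ hk0 hδhalf hlocu h0.le hrw
      have h2 : (w/2)^2 * ((w/(2*c₂))^(k⁻¹)) = w^p / C₂ := by
        rw [hpdef, hC₂def]; exact stmt11_lower_alg w c₂ k h0 hc₂
      have h3 : w ^ p ≤ C₂ * ε ^ 2 := by
        have h4 := h1.trans hEw
        rw [h2, div_le_iff₀ hC₂] at h4
        linarith
      have h5 : w = (w ^ p) ^ (p⁻¹) := (Real.rpow_rpow_inv h0.le hp.ne').symm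
      have h6 : (w ^ p) ^ (p⁻¹) ≤ (C₂ * ε ^ 2) ^ (p⁻¹) :=
        Real.rpow_le_rpow (Real.rpow_nonneg h0.le _) h3 (by positivity)
      have h7 : (C₂ * ε ^ 2) ^ (p⁻¹) = B₁ * ε ^ q := by
        rw [Real.mul_rpow hC₂.le (by positivity), hB₁def, ← Real.rpow_two ε,
          ← Real.rpow_mul hε.le, h2p]
      linarith [h5, h6, h7]
  have hbddM : BddAbove {w | ∃ u, w = u - f z ∧ L2 f (trunc f u) ≤ ε} := ⟨B₁ * ε ^ q, hub⟩
  have hMlow : a * ε ^ q ≤ rhoM ε f (f z) := by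
    have := le_csSup hbddM hmemM
    simpa [rhoM] using this
  have hMup : rhoM ε f (f z) ≤ B₁ * ε ^ q := by
    have := csSup_le ⟨v, hmemM⟩ hub
    simpa [rhoM] using this
  -- rhoZ bounds
  set r : ℝ := (v / c₂) ^ (k⁻¹) with hrdef
  have hr0 : 0 < r := Real.rpow_pos_of_pos (by positivity) _
  have hrδ : r ≤ δ := by
    have h1 : v / c₂ ≤ δ ^ k := by
      rw [div_le_iff₀ hc₂]
      have h2 : vs = c₁ * δ^k := hvsdef
      have h3 := mul_le_mul_of_nonneg_right hc₁₂ hδk.le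
      linarith
    calc r ≤ (δ ^ k) ^ (k⁻¹) := Real.rpow_le_rpow (by positivity) h1 (by positivity)
      _ = δ := Real.rpow_rpow_inv hδ.le hk0.ne'
  have hrk : r ^ k = v / c₂ := Real.rpow_inv_rpow (by positivity) hk0.ne'
  obtain ⟨t₀, ht₀Icc, ht₀d⟩ : ∃ t₀, t₀ ∈ Icc (0:ℝ) 1 ∧ |t₀ - z| = r := by
    rcases le_total z (1/2) with hhalf | hhalf
    · refine ⟨z + r, ⟨by linarith [hz01.1], by linarith⟩, ?_⟩
      rw [add_sub_cancel_left, abs_of_nonneg hr0.le]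
    · refine ⟨z - r, ⟨by linarith, by linarith [hz01.2]⟩, ?_⟩
      rw [show z - r - z = -r by ring, abs_neg, abs_of_nonneg hr0.le]
  have hft₀ : f t₀ ≤ rhoM ε f (f z) + f z := by
    have h1 : f t₀ - f z ≤ c₂ * |t₀ - z| ^ k := hlocu t₀ ht₀Icc (by rw [ht₀d]; exact hrδ)
    rw [ht₀d, hrk] at h1
    have h2 : c₂ * (v / c₂) = v := by field_simp
    rw [h2] at h1
    linarith
  have hmemZ : r ∈ {w | ∃ t ∈ Icc (0:ℝ) 1, w = |t - z| ∧ f t ≤ rhoM ε f (f z) + f z} :=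
    ⟨t₀, ht₀Icc, ht₀d.symm, hft₀⟩
  have hubZ : ∀ w ∈ {w | ∃ t ∈ Icc (0:ℝ) 1, w = |t - z| ∧ f t ≤ rhoM ε f (f z) + f z},
      w ≤ (B₁/c₁)^(k⁻¹) * ε ^ q2 := by
    rintro w ⟨t, htIcc, hwt, hft⟩
    have h1 : f t - f z ≤ B₁ * ε ^ q := by linarith
    have h2 : c₁ * (min |t - z| δ) ^ k ≤ f t - f z := hlow t htIcc
    have hminlt : min |t - z| δ < δ := by
      by_contra hcon
      push_neg at hcon
      have h3 : δ ^ k ≤ (min |t - z| δ) ^ k := Real.rpow_le_rpow hδ.le hcon hk0.le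
      have h4 : c₁ * δ^k ≤ c₁ * (min |t - z| δ)^k := mul_le_mul_of_nonneg_left h3 hc₁.le
      have h5 : vs = c₁ * δ^k := hvsdef
      have h6 := mul_pos hc₁ hδk
      linarith
    have hmeq : min |t - z| δ = |t - z| := min_eq_left (by
      rcases le_total |t - z| δ with h' | h'
      · exact h'
      · exfalso; rw [min_eq_right h'] at hminlt; exact lt_irrefl _ hminlt)
    rw [hmeq] at h2
    have h4 : |t - z| ^ k ≤ (B₁ * ε ^ q) / c₁ := by
      rw [le_div_iff₀ hc₁]; linarith
    have h5 : w ≤ ((B₁ * ε ^ q)/c₁) ^ (k⁻¹) := by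
      rw [hwt]
      calc |t - z| = (|t - z| ^ k) ^ (k⁻¹) := (Real.rpow_rpow_inv (abs_nonneg _) hk0.ne').symm
        _ ≤ _ := Real.rpow_le_rpow (Real.rpow_nonneg (abs_nonneg _) _) h4 (by positivity)
    have h6 : ((B₁ * ε ^ q)/c₁) ^ (k⁻¹) = (B₁/c₁)^(k⁻¹) * ε ^ q2 := by
      rw [show B₁ * ε ^ q / c₁ = (B₁/c₁) * ε ^ q by ring,
        Real.mul_rpow (by positivity) hεq.le, ← Real.rpow_mul hε.le, hq2k]
    linarith [h5, h6.le, h6.ge]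
  have hbddZ : BddAbove {w | ∃ t ∈ Icc (0:ℝ) 1, w = |t - z| ∧ f t ≤ rhoM ε f (f z) + f z} :=
    ⟨(B₁/c₁)^(k⁻¹) * ε ^ q2, hubZ⟩
  have hZlow : r ≤ rhoZ ε f z (f z) := by
    have := le_csSup hbddZ hmemZ
    simpa [rhoZ] using this
  have hZup : rhoZ ε f z (f z) ≤ (B₁/c₁)^(k⁻¹) * ε ^ q2 := by
    have := csSup_le ⟨r, hmemZ⟩ hubZ
    simpa [rhoZ] using this
  have hreq : r = (a/c₂) ^ (k⁻¹) * ε ^ q2 := by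
    rw [hrdef, hvdef, show a * ε ^ q / c₂ = (a/c₂) * ε ^ q by ring,
      Real.mul_rpow (by positivity) hεq.le, ← Real.rpow_mul hε.le, hq2k]
  refine ⟨?_, ?_, ?_, ?_⟩
  · calc min a ((a/c₂)^(k⁻¹)) * ε ^ q ≤ a * ε ^ q :=
        mul_le_mul_of_nonneg_right (min_le_left _ _) hεq.le
      _ ≤ rhoM ε f (f z) := hMlow
  · calc rhoM ε f (f z) ≤ B₁ * ε ^ q := hMup
      _ ≤ max B₁ ((B₁/c₁)^(k⁻¹)) * ε ^ q :=
        mul_le_mul_of_nonneg_right (le_max_left _ _) hεq.le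
  · calc min a ((a/c₂)^(k⁻¹)) * ε ^ q2 ≤ (a/c₂)^(k⁻¹) * ε ^ q2 :=
        mul_le_mul_of_nonneg_right (min_le_right _ _) hεq2.le
      _ = r := hreq.symm
      _ ≤ rhoZ ε f z (f z) := hZlow
  · calc rhoZ ε f z (f z) ≤ (B₁/c₁)^(k⁻¹) * ε ^ q2 := hZup
      _ ≤ max B₁ ((B₁/c₁)^(k⁻¹)) * ε ^ q2 :=
        mul_le_mul_of_nonneg_right (le_max_right _ _) hεq2.le
end

section
/- Let f, g be convex functions on [0,1], each with a unique minimizer, and suppose ‖f − g‖_2 ≤ ε. Then |M(f) − M(g)| ≤ ρ_m(ε; f) + ρ_m(ε; g) ≤ 2 max{ρ_m(ε; f), ρ_m(ε; g)}; in particular ω_m(ε; f) ≤ 3 ρ_m(ε; f) follows from |M(f) − M(g)| ≤ 3 ρ_m(ε; f) for any such g. -/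
open MeasureTheory Set

private lemma intIoo (F : ℝ → ℝ) :
    (∫ t in (0:ℝ)..1, F t) = ∫ t in Ioo (0:ℝ) 1, F t := by
  rw [intervalIntegral.integral_of_le zero_le_one, integral_Ioc_eq_integral_Ioo]

private lemma L2_eq (f g : ℝ → ℝ) :
    L2 f g = Real.sqrt (∫ t in Ioo (0:ℝ) 1, (f t - g t) ^ 2) := by
  rw [L2, intIoo]

private lemma L2_trunc (f : ℝ → ℝ) (u : ℝ) :
    L2 f (trunc f u) = Real.sqrt (∫ t in Ioo (0:ℝ) 1, (max 0 (u - f t)) ^ 2) := by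
  have h : ∀ t : ℝ, (f t - trunc f u t) ^ 2 = (max 0 (u - f t)) ^ 2 := by
    intro t
    rcases le_total (f t) u with h | h
    · rw [trunc, max_eq_right h, max_eq_right (by linarith)]; ring
    · rw [trunc, max_eq_left h, max_eq_left (by linarith)]; ring
  simp only [L2, h, intIoo]

private lemma L2_comm (f g : ℝ → ℝ) : L2 f g = L2 g f := by
  have h : ∀ t : ℝ, (f t - g t) ^ 2 = (g t - f t) ^ 2 := fun t => by ring
  simp only [L2, h]

private lemma minOnU {f : ℝ → ℝ} {zf : ℝ} (hzf : UniqueMinOn f zf) :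
    ∀ t ∈ Icc (0:ℝ) 1, f zf ≤ f t := by
  intro t ht
  rcases eq_or_ne t zf with h | h
  · rw [h]
  · exact (hzf.2 t ht h).le

private lemma maxOnC {f : ℝ → ℝ} (hf : ConvexOn ℝ (Icc (0:ℝ) 1) f) :
    ∀ t ∈ Icc (0:ℝ) 1, f t ≤ max (f 0) (f 1) := by
  intro t ht
  have h0 : (0:ℝ) ∈ Icc (0:ℝ) 1 := by norm_num
  have h1 : (1:ℝ) ∈ Icc (0:ℝ) 1 := by norm_num
  have := hf.2 h0 h1 (by linarith [ht.2] : (0:ℝ) ≤ 1 - t) ht.1 (by ring)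
  simp only [smul_eq_mul, mul_zero, mul_one, zero_add] at this
  nlinarith [le_max_left (f 0) (f 1), le_max_right (f 0) (f 1), ht.1, ht.2]

private lemma contOn {f : ℝ → ℝ} (hf : ConvexOn ℝ (Icc (0:ℝ) 1) f) :
    ContinuousOn f (Ioo (0:ℝ) 1) := by
  have := hf.continuousOn_interior
  rwa [interior_Icc] at this

private lemma integrable_sq_of_bdd {F : ℝ → ℝ} (hc : ContinuousOn F (Ioo (0:ℝ) 1)) {m M : ℝ}
    (hb : ∀ t ∈ Ioo (0:ℝ) 1, m ≤ F t ∧ F t ≤ M) :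
    IntegrableOn (fun t => (F t) ^ 2) (Ioo (0:ℝ) 1) := by
  refine ⟨((hc.pow 2).aestronglyMeasurable measurableSet_Ioo), ?_⟩
  refine HasFiniteIntegral.restrict_of_bounded (C := (|m| + |M|) ^ 2)
    (by simp [Real.volume_Ioo]) ?_
  rw [ae_restrict_iff' measurableSet_Ioo]
  refine ae_of_all _ fun t ht => ?_
  have h1 := (hb t ht).1
  have h2 := (hb t ht).2
  rw [Real.norm_eq_abs, abs_of_nonneg (sq_nonneg _)]
  nlinarith [abs_nonneg m, abs_nonneg M, le_abs_self M, neg_abs_le m]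

private lemma intP {f : ℝ → ℝ} {zf : ℝ} (hf : ConvexOn ℝ (Icc (0:ℝ) 1) f)
    (hzf : UniqueMinOn f zf) (u : ℝ) :
    IntegrableOn (fun t => (max 0 (u - f t)) ^ 2) (Ioo (0:ℝ) 1) := by
  have hc : ContinuousOn (fun t => max 0 (u - f t)) (Ioo (0:ℝ) 1) := by
    have h1 : ContinuousOn (fun t => u - f t) (Ioo (0:ℝ) 1) :=
      continuousOn_const.sub (contOn hf)
    exact continuousOn_const.sup' h1
  refine integrable_sq_of_bdd hc (m := 0) (M := max 0 (u - f zf)) ?_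
  intro t ht
  refine ⟨le_max_left _ _, max_le_max le_rfl ?_⟩
  have := minOnU hzf t (Ioo_subset_Icc_self ht)
  linarith

private lemma intD {f g : ℝ → ℝ} {zf zg : ℝ} (hf : ConvexOn ℝ (Icc (0:ℝ) 1) f)
    (hg : ConvexOn ℝ (Icc (0:ℝ) 1) g) (hzf : UniqueMinOn f zf) (hzg : UniqueMinOn g zg) :
    IntegrableOn (fun t => (f t - g t) ^ 2) (Ioo (0:ℝ) 1) := by
  refine integrable_sq_of_bdd ((contOn hf).sub (contOn hg))
    (m := f zf - max (g 0) (g 1)) (M := max (f 0) (f 1) - g zg) ?_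
  intro t ht
  have ht' := Ioo_subset_Icc_self ht
  have h1 := minOnU hzf t ht'
  have h2 := maxOnC hf t ht'
  have h3 := minOnU hzg t ht'
  have h4 := maxOnC hg t ht'
  constructor <;> linarith

private lemma intQ {g : ℝ → ℝ} {zg : ℝ} (hg : ConvexOn ℝ (Icc (0:ℝ) 1) g)
    (hzg : UniqueMinOn g zg) (c : ℝ) :
    IntegrableOn (fun t => (c - g t) ^ 2) (Ioo (0:ℝ) 1) := by
  refine integrable_sq_of_bdd (continuousOn_const.sub (contOn hg))
    (m := c - max (g 0) (g 1)) (M := c - g zg) ?_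
  intro t ht
  have ht' := Ioo_subset_Icc_self ht
  have h3 := minOnU hzg t ht'
  have h4 := maxOnC hg t ht'
  constructor <;> linarith

/-- The feasible set for `rhoM` is bounded above. -/
private lemma bddAboveS {f : ℝ → ℝ} {zf ε : ℝ} (hf : ConvexOn ℝ (Icc (0:ℝ) 1) f)
    (hzf : UniqueMinOn f zf) (hε : 0 < ε) :
    BddAbove {v | ∃ u, v = u - f zf ∧ L2 f (trunc f u) ≤ ε} := by
  refine ⟨max (f 0) (f 1) + ε - f zf, ?_⟩
  rintro v ⟨u, rfl, hu⟩
  set c := max (f 0) (f 1) with hc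
  have key : u - c ≤ ε := by
    rcases le_or_gt u c with h | h
    · linarith
    · -- pointwise lower bound by the constant (u - c)^2
      have hpt : ∀ t ∈ Ioo (0:ℝ) 1, (u - c) ^ 2 ≤ (max 0 (u - f t)) ^ 2 := by
        intro t ht
        have h2 := maxOnC hf t (Ioo_subset_Icc_self ht)
        have h3 : u - c ≤ max 0 (u - f t) := le_trans (by linarith) (le_max_right _ _)
        have h4 : (0:ℝ) ≤ u - c := by linarith
        nlinarith
      have hint : ((u - c) ^ 2) * 1 ≤ ∫ t in Ioo (0:ℝ) 1, (max 0 (u - f t)) ^ 2 := by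
        have := setIntegral_mono_on (f := fun _ => (u - c) ^ 2)
          (g := fun t => (max 0 (u - f t)) ^ 2) (μ := volume)
          (integrableOn_const (by simp [Real.volume_Ioo]))
          (intP hf hzf u) measurableSet_Ioo hpt
        rw [setIntegral_const] at this
        simpa [Real.volume_Ioo] using this
      have : u - c ≤ L2 f (trunc f u) := by
        rw [L2_trunc]
        calc u - c = Real.sqrt ((u - c) ^ 2) := by
              rw [Real.sqrt_sq (by linarith)]
          _ ≤ _ := Real.sqrt_le_sqrt (by linarith)
      linarith
  linarith

/-- `0` is in the feasible set. -/
private lemma zero_memS {f : ℝ → ℝ} {zf ε : ℝ}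
    (hzf : UniqueMinOn f zf) (hε : 0 < ε) :
    (0:ℝ) ∈ {v | ∃ u, v = u - f zf ∧ L2 f (trunc f u) ≤ ε} := by
  refine ⟨f zf, by ring, ?_⟩
  rw [L2_trunc]
  have h0 : ∫ t in Ioo (0:ℝ) 1, (max 0 (f zf - f t)) ^ 2 = 0 := by
    rw [setIntegral_congr_fun (g := fun _ => (0:ℝ)) measurableSet_Ioo ?_, integral_zero]
    intro t ht
    have := minOnU hzf t (Ioo_subset_Icc_self ht)
    simp only [max_eq_left (by linarith : f zf - f t ≤ 0)]
    norm_num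
  rw [h0, Real.sqrt_zero]
  exact hε.le

/-- `M(g) - M(f)` is in the feasible set of `f`. -/
private lemma cross_memS {f g : ℝ → ℝ} {zf zg ε : ℝ} (hf : ConvexOn ℝ (Icc (0:ℝ) 1) f)
    (hg : ConvexOn ℝ (Icc (0:ℝ) 1) g) (hzf : UniqueMinOn f zf) (hzg : UniqueMinOn g zg)
    (hfg : L2 f g ≤ ε) :
    (g zg - f zf) ∈ {v | ∃ u, v = u - f zf ∧ L2 f (trunc f u) ≤ ε} := by
  refine ⟨g zg, rfl, ?_⟩
  rw [L2_trunc]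
  refine le_trans ?_ (le_trans (le_of_eq (L2_eq f g).symm) hfg)
  refine Real.sqrt_le_sqrt ?_
  refine setIntegral_mono_on (intP hf hzf (g zg)) (intD hf hg hzf hzg) measurableSet_Ioo ?_
  intro t ht
  have h3 := minOnU hzg t (Ioo_subset_Icc_self ht)
  rcases le_total (g zg) (f t) with h | h
  · rw [max_eq_left (by linarith)]
    nlinarith [sq_nonneg (f t - g t)]
  · rw [max_eq_right (by linarith)]
    nlinarith

private lemma hard_memS {f g : ℝ → ℝ} {zf zg ε : ℝ} (hf : ConvexOn ℝ (Icc (0:ℝ) 1) f)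
    (hg : ConvexOn ℝ (Icc (0:ℝ) 1) g) (hzf : UniqueMinOn f zf) (hzg : UniqueMinOn g zg)
    (hfg : L2 f g ≤ ε) (hlt : g zg < f zf) :
    ((f zf - g zg)/3) ∈ {v | ∃ u, v = u - f zf ∧ L2 f (trunc f u) ≤ ε} := by
  obtain ⟨δ, hδ, hzmin⟩ : ∃ δ, 0 < δ ∧ g zg = f zf - δ :=
    ⟨f zf - g zg, by linarith, by ring⟩
  obtain ⟨v, hv⟩ : ∃ v, v = f zf + δ/3 := ⟨_, rfl⟩
  refine ⟨v, by rw [hv, hzmin]; ring, ?_⟩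
  have hgc : ContinuousOn g (Ioo (0:ℝ) 1) := contOn hg
  set R : Set ℝ := Ioo (0:ℝ) 1 ∩ g ⁻¹' (Iio v) with hRdef
  set R1 : Set ℝ := Ioo (0:ℝ) 1 ∩ g ⁻¹' (Iio (f zf - 2*δ/3)) with hR1def
  have mR : MeasurableSet R :=
    (hgc.isOpen_inter_preimage isOpen_Ioo isOpen_Iio).measurableSet
  have mR1 : MeasurableSet R1 :=
    (hgc.isOpen_inter_preimage isOpen_Ioo isOpen_Iio).measurableSet
  have mR3 : MeasurableSet (Ioo (0:ℝ) 1 \ R) := measurableSet_Ioo.diff mR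
  have hRI : R ⊆ Ioo (0:ℝ) 1 := inter_subset_left
  have hR1I : R1 ⊆ Ioo (0:ℝ) 1 := inter_subset_left
  have hR1R : R1 ⊆ R := by
    rintro t ⟨ht, hgt⟩
    simp only [mem_preimage, mem_Iio] at hgt
    exact ⟨ht, by simp only [mem_preimage, mem_Iio]; linarith⟩
  have hunion : R ∪ (Ioo (0:ℝ) 1 \ R) = Ioo (0:ℝ) 1 := union_diff_cancel hRI
  have hdisj : Disjoint R (Ioo (0:ℝ) 1 \ R) := disjoint_sdiff_right
  have hdisj13 : Disjoint R1 (Ioo (0:ℝ) 1 \ R) := disjoint_sdiff_right.mono_left hR1R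
  have hIoofin : volume (Ioo (0:ℝ) 1) < ⊤ := by simp [Real.volume_Ioo]
  -- measure comparison via contraction towards zg
  have hmeas : volume R ≤ 4 * volume R1 := by
    have hsub : R ⊆ (fun t : ℝ => (3/4 : ℝ) * zg + (1/4 : ℝ) * t) ⁻¹' R1 := by
      rintro t ⟨ht, hgt⟩
      simp only [mem_preimage, mem_Iio] at hgt
      have ht' : t ∈ Icc (0:ℝ) 1 := Ioo_subset_Icc_self ht
      have hz0 := hzg.1.1
      have hz1 := hzg.1.2
      have hcvx := hg.2 hzg.1 ht' (by norm_num : (0:ℝ) ≤ 3/4)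
        (by norm_num : (0:ℝ) ≤ 1/4) (by norm_num)
      simp only [smul_eq_mul] at hcvx
      simp only [mem_preimage, mem_inter_iff, mem_Ioo, mem_Iio]
      have h1 := ht.1
      have h2 := ht.2
      refine ⟨⟨by nlinarith, by nlinarith⟩, ?_⟩
      calc g ((3/4 : ℝ) * zg + (1/4 : ℝ) * t) ≤ (3/4) * g zg + (1/4) * g t := hcvx
        _ < f zf - 2*δ/3 := by rw [hzmin]; rw [hv] at hgt; linarith
    calc volume R ≤ volume ((fun t : ℝ => (3/4 : ℝ) * zg + (1/4 : ℝ) * t) ⁻¹' R1) :=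
          measure_mono hsub
      _ = 4 * volume R1 := by
          have hcomp : (fun t : ℝ => (3/4 : ℝ) * zg + (1/4 : ℝ) * t) =
              ((3/4 : ℝ) * zg + ·) ∘ ((1/4 : ℝ) * ·) := rfl
          rw [hcomp, preimage_comp, Real.volume_preimage_mul_left (by norm_num : (1/4:ℝ) ≠ 0),
            measure_preimage_add]
          norm_num
  have hfin1 : volume R1 ≠ ⊤ := ((measure_mono hR1I).trans_lt hIoofin).ne
  have hmr : (volume R).toReal ≤ 4 * (volume R1).toReal := by
    have h4 : (4 : ENNReal) * volume R1 ≠ ⊤ := ENNReal.mul_ne_top (by norm_num) hfin1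
    have h5 := ENNReal.toReal_mono h4 hmeas
    rwa [ENNReal.toReal_mul, (by simp : ((4:ENNReal)).toReal = (4:ℝ))] at h5
  -- integrability
  have IP := intP hf hzf v
  have ID := intD hf hg hzf hzg
  have IQ := intQ hg hzg (f zf)
  have IPR := IP.mono_set hRI
  have IPR3 := IP.mono_set (diff_subset (s := Ioo (0:ℝ) 1) (t := R))
  have IDR1 := ID.mono_set hR1I
  have IDR3 := ID.mono_set (diff_subset (s := Ioo (0:ℝ) 1) (t := R))
  have IQR1 := IQ.mono_set hR1I
  have key : (∫ t in Ioo (0:ℝ) 1, (max 0 (v - f t))^2) ≤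
      ∫ t in Ioo (0:ℝ) 1, (f t - g t)^2 := by
    have e1 : (∫ t in Ioo (0:ℝ) 1, (max 0 (v - f t))^2) =
        (∫ t in R, (max 0 (v - f t))^2) + ∫ t in Ioo (0:ℝ) 1 \ R, (max 0 (v - f t))^2 := by
      rw [← setIntegral_union hdisj mR3 IPR IPR3, hunion]
    have e2 : (∫ t in R, (max 0 (v - f t))^2) ≤ (volume R).toReal * (δ/3)^2 := by
      have hpt : ∀ t ∈ R, (max 0 (v - f t))^2 ≤ (δ/3)^2 := by
        intro t ht
        have hft := minOnU hzf t (Ioo_subset_Icc_self (hRI ht))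
        have h1 : max 0 (v - f t) ≤ δ/3 := max_le (by linarith) (by rw [hv]; linarith)
        exact pow_le_pow_left₀ (le_max_left _ _) h1 2
      have h6 := setIntegral_mono_on IPR
        (integrableOn_const ((measure_mono hRI).trans_lt hIoofin).ne) mR hpt
      rwa [setIntegral_const, smul_eq_mul] at h6
    have e3 : (volume R1).toReal * (2*δ/3)^2 ≤ ∫ t in R1, (f zf - g t)^2 := by
      have hpt : ∀ t ∈ R1, (2*δ/3)^2 ≤ (f zf - g t)^2 := by
        rintro t ⟨ht, hgt⟩
        simp only [mem_preimage, mem_Iio] at hgt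
        nlinarith
      have h6 := setIntegral_mono_on
        (integrableOn_const ((measure_mono hR1I).trans_lt hIoofin).ne) IQR1 mR1 hpt
      rwa [setIntegral_const, smul_eq_mul] at h6
    have e4 : (∫ t in R1, (f zf - g t)^2) ≤ ∫ t in R1, (f t - g t)^2 := by
      refine setIntegral_mono_on IQR1 IDR1 mR1 ?_
      rintro t ⟨ht, hgt⟩
      simp only [mem_preimage, mem_Iio] at hgt
      have hft := minOnU hzf t (Ioo_subset_Icc_self ht)
      nlinarith
    have e5 : (∫ t in Ioo (0:ℝ) 1 \ R, (max 0 (v - f t))^2) ≤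
        ∫ t in Ioo (0:ℝ) 1 \ R, (f t - g t)^2 := by
      refine setIntegral_mono_on IPR3 IDR3 mR3 ?_
      rintro t ⟨ht, htR⟩
      have hgt : v ≤ g t := by
        by_contra hcon
        exact htR ⟨ht, by simp only [mem_preimage, mem_Iio]; linarith⟩
      rcases le_total (v) (f t) with h | h
      · rw [max_eq_left (by linarith)]
        nlinarith [sq_nonneg (f t - g t)]
      · rw [max_eq_right (by linarith)]
        nlinarith
    have e6 : (∫ t in R1, (f t - g t)^2) + (∫ t in Ioo (0:ℝ) 1 \ R, (f t - g t)^2) ≤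
        ∫ t in Ioo (0:ℝ) 1, (f t - g t)^2 := by
      rw [← setIntegral_union hdisj13 mR3 IDR1 IDR3]
      refine setIntegral_mono_set ID (Filter.Eventually.of_forall (fun t => sq_nonneg _)) ?_
      exact HasSubset.Subset.eventuallyLE (union_subset hR1I diff_subset)
    have e7 : (volume R).toReal * (δ/3)^2 ≤ (volume R1).toReal * (2*δ/3)^2 := by
      have h8 := mul_le_mul_of_nonneg_right hmr (sq_nonneg (δ/3))
      nlinarith
    linarith
  rw [L2_trunc]
  exact le_trans (Real.sqrt_le_sqrt key) (le_trans (le_of_eq (L2_eq f g).symm) hfg)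

/-- If ‖f - g‖₂ ≤ ε for convex f, g with unique minimizers, then
|M(f) - M(g)| ≤ ρ_m(ε;f) + ρ_m(ε;g) ≤ 2 max{ρ_m(ε;f), ρ_m(ε;g)}, and
|M(f) - M(g)| ≤ 3 ρ_m(ε;f). -/
theorem stmt14 (f g : ℝ → ℝ) (zf zg ε : ℝ)
    (hf : ConvexOn ℝ (Icc (0:ℝ) 1) f) (hg : ConvexOn ℝ (Icc (0:ℝ) 1) g)
    (hzf : UniqueMinOn f zf) (hzg : UniqueMinOn g zg)
    (hε : 0 < ε) (hfg : L2 f g ≤ ε) :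
    |f zf - g zg| ≤ rhoM ε f (f zf) + rhoM ε g (g zg) ∧
    rhoM ε f (f zf) + rhoM ε g (g zg) ≤ 2 * max (rhoM ε f (f zf)) (rhoM ε g (g zg)) ∧
    |f zf - g zg| ≤ 3 * rhoM ε f (f zf) := by
  have hbf := bddAboveS hf hzf hε
  have hbg := bddAboveS hg hzg hε
  have hgf : L2 g f ≤ ε := by rw [← L2_comm]; exact hfg
  have h0f : (0:ℝ) ≤ rhoM ε f (f zf) := le_csSup hbf (zero_memS hzf hε)
  have h0g : (0:ℝ) ≤ rhoM ε g (g zg) := le_csSup hbg (zero_memS hzg hε)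
  have hcf : g zg - f zf ≤ rhoM ε f (f zf) := le_csSup hbf (cross_memS hf hg hzf hzg hfg)
  have hcg : f zf - g zg ≤ rhoM ε g (g zg) := le_csSup hbg (cross_memS hg hf hzg hzf hgf)
  refine ⟨?_, ?_, ?_⟩
  · rw [abs_le]
    constructor <;> linarith
  · rcases le_total (rhoM ε f (f zf)) (rhoM ε g (g zg)) with h | h
    · rw [max_eq_right h]; linarith
    · rw [max_eq_left h]; linarith
  · rcases le_or_gt (f zf) (g zg) with h | h
    · rw [abs_of_nonpos (by linarith)]; linarith
    · have h3 : (f zf - g zg)/3 ≤ rhoM ε f (f zf) :=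
        le_csSup hbf (hard_memS hf hg hzf hzg hfg h)
      rw [abs_of_pos (by linarith)]
      linarith
end

section
/- Let f be convex on [0,1] with values known at the grid points i/n, i = 0,…,n, and let i_m = argmin_i f(i/n) with i_m ≤ n−2. Then the minimizer Z(f) of f on [0,1] satisfies Z(f) ≤ t*, where t* is the horizontal coordinate of the intersection of the horizontal line y = f(i_m/n) with the line through ((i_m+1)/n, f((i_m+1)/n)) with slope n(f((i_m+2)/n) − f((i_m+1)/n)), provided that slope is positive. -/
open MeasureTheory Set

/-- If i_m is the grid argmin and the chord slope to its right is positive,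
then the minimizer of f lies to the left of the intersection point t*. -/
theorem stmt17 (f : ℝ → ℝ) (n im : ℕ) (z : ℝ)
    (hf : ConvexOn ℝ (Icc (0:ℝ) 1) f) (hz : UniqueMinOn f z) (hn : 0 < n)
    (him : im + 2 ≤ n) (hmin : ∀ i ≤ n, f ((im:ℝ)/n) ≤ f ((i:ℝ)/n))
    (hslope : 0 < (n:ℝ) * (f (((im:ℝ)+2)/n) - f (((im:ℝ)+1)/n))) :
    z ≤ ((im:ℝ)+1)/n +
      (f ((im:ℝ)/n) - f (((im:ℝ)+1)/n)) /
        ((n:ℝ) * (f (((im:ℝ)+2)/n) - f (((im:ℝ)+1)/n))) := by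
  set N : ℝ := (n : ℝ) with hN
  have hN0 : (0:ℝ) < N := by rw [hN]; exact_mod_cast hn
  set a : ℝ := (im:ℝ)/N with ha
  set b : ℝ := ((im:ℝ)+1)/N with hb
  set c : ℝ := ((im:ℝ)+2)/N with hc
  set s : ℝ := N * (f c - f b) with hs
  have him2 : ((im:ℝ) + 2) ≤ N := by rw [hN]; exact_mod_cast him
  have hamem : a ∈ Icc (0:ℝ) 1 := by
    constructor
    · positivity
    · rw [div_le_one hN0]; linarith
  have hbmem : b ∈ Icc (0:ℝ) 1 := by
    constructor
    · positivity
    · rw [div_le_one hN0]; linarith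
  have hcmem : c ∈ Icc (0:ℝ) 1 := by
    constructor
    · positivity
    · rw [div_le_one hN0]; linarith
  have hab : a < b := by
    rw [ha, hb, div_lt_div_iff₀ hN0 hN0]; nlinarith
  have hbc : b < c := by
    rw [hb, hc, div_lt_div_iff₀ hN0 hN0]; nlinarith
  have hba : b - a = 1 / N := by rw [hb, ha]; field_simp; ring
  have hcb : c - b = 1 / N := by rw [hc, hb]; field_simp; ring
  have hfab : f a ≤ f b := by
    have h0 := hmin (im + 1) (by omega)
    have h1 : ((im + 1 : ℕ) : ℝ) = (im:ℝ) + 1 := by push_cast; ring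
    rwa [h1] at h0
  have hfac : f a ≤ f c := by
    have h0 := hmin (im + 2) (by omega)
    have h1 : ((im + 2 : ℕ) : ℝ) = (im:ℝ) + 2 := by push_cast; ring
    rwa [h1] at h0
  have hfza : f z ≤ f a := by
    rcases eq_or_ne a z with h | h
    · rw [← h]
    · exact le_of_lt (hz.2 a hamem h)
  show z ≤ b + (f a - f b) / s
  by_contra hzt
  push_neg at hzt
  have hkey : s * (z - b) > f a - f b := by
    have h1 : s * ((f a - f b) / s) = f a - f b := by field_simp
    nlinarith [mul_lt_mul_of_pos_left hzt hslope]
  rcases lt_trichotomy z b with hzb | hzb | hzb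
  · -- z < b : slope z b ≤ slope b c
    have hzmem : z ∈ Icc (0:ℝ) 1 := hz.1
    have hsl := hf.slope_mono_adjacent hzmem hcmem hzb hbc
    rw [hcb, show (f c - f b) / (1/N) = (f c - f b) * N from by field_simp] at hsl
    have hbz : 0 < b - z := by linarith
    have h3 : (f b - f z) / (b - z) ≤ s := by
      calc (f b - f z) / (b - z) ≤ (f c - f b) * N := hsl
      _ = s := by rw [hs]; ring
    have h2 : f b - f z ≤ s * (b - z) := (div_le_iff₀ hbz).mp h3
    nlinarith
  · subst hzb
    simp only [sub_self, mul_zero] at hkey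
    linarith
  · -- z > b : slope a b ≤ slope b z
    have hzmem : z ∈ Icc (0:ℝ) 1 := hz.1
    have hsl := hf.slope_mono_adjacent hamem hzmem hab hzb
    rw [hba, show (f b - f a) / (1/N) = (f b - f a) * N from by field_simp] at hsl
    have hzb' : 0 < z - b := by linarith
    have h4 : (f b - f a) * N * (z - b) ≤ f z - f b := by
      have := (le_div_iff₀ hzb').mp hsl
      linarith
    have hza : f z < f a := hz.2 a hamem (by
      intro h
      rw [h] at hab
      linarith)
    nlinarith [mul_nonneg (mul_nonneg (show (0:ℝ) ≤ f b - f a by linarith) hN0.le) hzb'.le]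
end
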